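/- For every complex number q with |q| < 1 and every integer n ≥ 1, the family λ ↦ C_λ(q)·q^{4(λ₁ + 2λ₂ + ⋯ + nλ_n)}, indexed by weakly decreasing n-tuples λ₁ ≥ λ₂ ≥ ⋯ ≥ λ_n ≥ 0 of nonnegative integers, is summable, and 1/((n)_{q²}! · (n+1)_{q²}!) = (1 − q²)ⁿ · Σ_λ C_λ(q)·q^{4(λ₁ + 2λ₂ + ⋯ + nλ_n)}. -/

import Mathlib

open Finset

/-- The `t`-factorial `(k)_t! = ∏_{j=1}^{k} (1 - t^j)/(1 - t)`, with `(0)_t! = 1`. -/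
noncomputable def qFactorial (t : ℂ) (k : ℕ) : ℂ :=
  ∏ j ∈ Finset.range k, (1 - t ^ (j + 1)) / (1 - t)

/-- For a weakly decreasing tuple `λ : Fin n → ℕ`, the constant
`C_λ(q) = ∏_i 1/(m_i)_{q²}!`, where `m_i` are the sizes of the maximal blocks of equal
entries of `λ` (equivalently, the multiplicities of the distinct values of `λ`). -/
noncomputable def Cpart {n : ℕ} (q : ℂ) (lam : Fin n → ℕ) : ℂ :=
  ∏ v ∈ Finset.image lam Finset.univ,
    (qFactorial (q ^ 2) ((Finset.univ.filter (fun i => lam i = v)).card))⁻¹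

namespace Stmt5

noncomputable def P (t : ℂ) : ℕ → ℂ := fun k => ∏ j ∈ Finset.range k, (1 - t ^ (j + 1))

lemma P_zero (t : ℂ) : P t 0 = 1 := by simp [P]

lemma P_succ (t : ℂ) (k : ℕ) : P t (k + 1) = P t k * (1 - t ^ (k + 1)) :=
  Finset.prod_range_succ _ _

lemma P_ne_zero {t : ℂ} (ht : ∀ j : ℕ, 1 ≤ j → (1 : ℂ) - t ^ j ≠ 0) (k : ℕ) :
    P t k ≠ 0 :=
  Finset.prod_ne_zero_iff.2 fun j _ => ht (j + 1) (by omega)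

lemma qFactorial_eq (t : ℂ) (m : ℕ) : qFactorial t m = P t m / (1 - t) ^ m := by
  rw [qFactorial, P, Finset.prod_div_distrib, Finset.prod_const, Finset.card_range]

lemma qFactorial_ne_zero {t : ℂ} (ht : ∀ j : ℕ, 1 ≤ j → (1 : ℂ) - t ^ j ≠ 0) (m : ℕ) :
    qFactorial t m ≠ 0 := by
  have h1 : (1 : ℂ) - t ≠ 0 := by simpa using ht 1 le_rfl
  rw [qFactorial_eq]
  exact div_ne_zero (P_ne_zero ht m) (pow_ne_zero _ h1)

/-- summand of the key finite identity -/
noncomputable def cc (t : ℂ) (n m : ℕ) : ℂ :=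
  t ^ (m * (m + 1)) * P t n * P t (n + 1) * (P t m * P t (m + 1) * P t (n - m))⁻¹

lemma cc_diag {t : ℂ} (ht : ∀ j : ℕ, 1 ≤ j → (1 : ℂ) - t ^ j ≠ 0) (n : ℕ) :
    cc t n n = t ^ (n * (n + 1)) := by
  have h1 := P_ne_zero ht n
  have h2 := P_ne_zero ht (n + 1)
  rw [cc, show n - n = 0 from by omega, P_zero]
  field_simp

lemma cc_zero {t : ℂ} (ht : ∀ j : ℕ, 1 ≤ j → (1 : ℂ) - t ^ j ≠ 0) (n : ℕ) :
    cc t (n + 1) 0 = (1 - t ^ (n + 2)) * cc t n 0 := by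
  have h1 := P_ne_zero ht n
  have f0 : (1 : ℂ) - t ≠ 0 := by simpa using ht 1 le_rfl
  have f1 : (1 : ℂ) - t ^ n * t ≠ 0 := by rw [← pow_succ]; exact ht _ (by omega)
  have f2 : (1 : ℂ) - t ^ n * t ^ 2 ≠ 0 := by rw [← pow_add]; exact ht _ (by omega)
  rw [cc, cc, Nat.sub_zero, Nat.sub_zero, P_zero, show n + 1 + 1 = n + 2 from rfl,
    P_succ t (n + 1), P_succ t n, P_succ t 0, P_zero,
    show t ^ (n + 2) = t ^ n * t ^ 2 from by rw [pow_add],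
    show t ^ (n + 1) = t ^ n * t from by rw [pow_succ], pow_one]
  field_simp

lemma cc_mid {t : ℂ} (ht : ∀ j : ℕ, 1 ≤ j → (1 : ℂ) - t ^ j ≠ 0) (n m : ℕ)
    (hm : 1 ≤ m) (hmn : m ≤ n) :
    cc t (n + 1) m = (1 - t ^ (n + m + 2)) * cc t n m + t ^ (n + m + 1) * cc t n (m - 1) := by
  obtain ⟨k, rfl⟩ : ∃ k, m = k + 1 := ⟨m - 1, by omega⟩
  obtain ⟨d, rfl⟩ : ∃ d, n = k + 1 + d := ⟨n - (k + 1), by omega⟩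
  have s1 : k + 1 + d + 1 - (k + 1) = d + 1 := by omega
  have s2 : k + 1 + d - (k + 1) = d := by omega
  have s3 : k + 1 - 1 = k := by omega
  have s4 : k + 1 + d - k = d + 1 := by omega
  rw [cc, cc, cc, s1, s2, s3, s4]
  have hPk := P_ne_zero ht k
  have hPd := P_ne_zero ht d
  have hPK' : P t (k + d + 1) ≠ 0 := P_ne_zero ht _
  have f1 : (1 : ℂ) - t ^ k * t ≠ 0 := by rw [← pow_succ]; exact ht _ (by omega)
  have f2 : (1 : ℂ) - t ^ k * t ^ 2 ≠ 0 := by rw [← pow_add]; exact ht _ (by omega)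
  have f3 : (1 : ℂ) - t ^ d * t ≠ 0 := by rw [← pow_succ]; exact ht _ (by omega)
  have f4 : (1 : ℂ) - t ^ k * t ^ d * t ^ 2 ≠ 0 := by
    rw [← pow_add, ← pow_add]; exact ht _ (by omega)
  have f5 : (1 : ℂ) - t ^ k * t ^ d * t ^ 3 ≠ 0 := by
    rw [← pow_add, ← pow_add]; exact ht _ (by omega)
  rw [show k + 1 + d + 1 + 1 = (k + d + 2) + 1 from by ring,
      show k + 1 + d + 1 = (k + d + 1) + 1 from by ring]
  rw [P_succ t (k + d + 2), P_succ t (k + d + 1), P_succ t (k + 1), P_succ t k, P_succ t d]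
  rw [show k + d + 2 + 1 = k + d + 3 from by ring, show k + d + 1 + 1 = k + d + 2 from by ring,
      show k + 1 + 1 = k + 2 from by ring]
  rw [show (k + 1) * (k + 1 + 1) = k * k + k + k + k + 2 from by ring,
      show k * (k + 1) = k * k + k from by ring,
      show k + 1 + d + (k + 1) + 2 = k + k + d + 4 from by ring,
      show k + 1 + d + (k + 1) + 1 = k + k + d + 3 from by ring,
      show k + 1 + d = k + d + 1 from by ring]
  rw [show t ^ (k * k + k + k + k + 2) = t ^ (k * k) * t ^ k * t ^ k * t ^ k * t ^ 2 from by
        rw [pow_add, pow_add, pow_add, pow_add],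
      show t ^ (k * k + k) = t ^ (k * k) * t ^ k from by rw [pow_add],
      show t ^ (k + k + d + 4) = t ^ k * t ^ k * t ^ d * t ^ 4 from by
        rw [pow_add, pow_add, pow_add],
      show t ^ (k + k + d + 3) = t ^ k * t ^ k * t ^ d * t ^ 3 from by
        rw [pow_add, pow_add, pow_add],
      show t ^ (k + d + 3) = t ^ k * t ^ d * t ^ 3 from by rw [pow_add, pow_add],
      show t ^ (k + d + 2) = t ^ k * t ^ d * t ^ 2 from by rw [pow_add, pow_add],
      show t ^ (k + 2) = t ^ k * t ^ 2 from by rw [pow_add],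
      show t ^ (k + 1) = t ^ k * t from by rw [pow_succ],
      show t ^ (d + 1) = t ^ d * t from by rw [pow_succ]]
  simp only [← div_eq_mul_inv, ← mul_div_assoc]
  rw [div_add_div _ _ (by apply_rules [mul_ne_zero]) (by apply_rules [mul_ne_zero]),
    div_eq_div_iff (by apply_rules [mul_ne_zero]) (by apply_rules [mul_ne_zero])]
  ring

lemma key {t : ℂ} (ht : ∀ j : ℕ, 1 ≤ j → (1 : ℂ) - t ^ j ≠ 0) :
    ∀ n : ℕ, ∑ m ∈ Finset.range (n + 1), cc t n m = 1 := by
  intro n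
  induction n with
  | zero =>
    rw [Finset.sum_range_one, cc, Nat.sub_zero, P_zero, P_succ t 0, P_zero, pow_zero]
    have f0 : (1 : ℂ) - t ≠ 0 := by simpa using ht 1 le_rfl
    field_simp
    rw [zero_add, pow_one, div_self f0]
  | succ n ih =>
    have expand : ∀ m ∈ Finset.range (n + 2), cc t (n + 1) m =
        (if m ≤ n then (1 - t ^ (n + m + 2)) * cc t n m else 0) +
        (if 1 ≤ m then t ^ (n + m + 1) * cc t n (m - 1) else 0) := by
      intro m hm
      rw [Finset.mem_range] at hm
      rcases Nat.eq_zero_or_pos m with rfl | hm1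
      · rw [if_pos (by omega), if_neg (by omega), add_zero, cc_zero ht n]
      rcases Nat.lt_or_ge m (n + 1) with hlt | hge
      · rw [if_pos (show m ≤ n from by omega), if_pos (show 1 ≤ m from hm1),
          cc_mid ht n m hm1 (by omega)]
      · have hmeq : m = n + 1 := by omega
        subst hmeq
        rw [if_neg (by omega), if_pos (by omega), zero_add, cc_diag ht (n + 1),
          show n + 1 - 1 = n from by omega, cc_diag ht n, ← pow_add]
        congr 1
        ring
    have h1 : ∑ m ∈ Finset.range (n + 2),
        (if m ≤ n then (1 - t ^ (n + m + 2)) * cc t n m else 0) =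
        ∑ m ∈ Finset.range (n + 1), (1 - t ^ (n + m + 2)) * cc t n m := by
      rw [Finset.sum_range_succ, if_neg (by omega), add_zero]
      exact Finset.sum_congr rfl fun m hm =>
        if_pos (by rw [Finset.mem_range] at hm; omega)
    have h2 : ∑ m ∈ Finset.range (n + 2),
        (if 1 ≤ m then t ^ (n + m + 1) * cc t n (m - 1) else 0) =
        ∑ m ∈ Finset.range (n + 1), t ^ (n + m + 2) * cc t n m := by
      rw [Finset.sum_range_succ']
      rw [if_neg (by omega), add_zero]
      refine Finset.sum_congr rfl fun m _ => ?_
      rw [if_pos (by omega : 1 ≤ m + 1), show n + (m + 1) + 1 = n + m + 2 from by omega,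
        show m + 1 - 1 = m from rfl]
    calc ∑ m ∈ Finset.range (n + 2), cc t (n + 1) m
        = ∑ m ∈ Finset.range (n + 2),
            ((if m ≤ n then (1 - t ^ (n + m + 2)) * cc t n m else 0) +
             (if 1 ≤ m then t ^ (n + m + 1) * cc t n (m - 1) else 0)) :=
          Finset.sum_congr rfl expand
      _ = ∑ m ∈ Finset.range (n + 1), (1 - t ^ (n + m + 2)) * cc t n m +
          ∑ m ∈ Finset.range (n + 1), t ^ (n + m + 2) * cc t n m := by
          rw [Finset.sum_add_distrib, h1, h2]
      _ = ∑ m ∈ Finset.range (n + 1), cc t n m := by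
          rw [← Finset.sum_add_distrib]
          exact Finset.sum_congr rfl fun m _ => by ring
      _ = 1 := ih


/-- triangular-type number: `T N = 1 + 2 + ⋯ + N`. -/
def T (N : ℕ) : ℕ := ∑ i ∈ Finset.range N, (i + 1)

lemma T_two (N : ℕ) : 2 * T N = N * (N + 1) := by
  induction N with
  | zero => simp [T]
  | succ N ih => rw [T, Finset.sum_range_succ, ← T]; ring_nf; ring_nf at ih; omega

lemma T_pos (N : ℕ) : 1 ≤ T (N + 1) := by
  rw [T, Finset.sum_range_succ]; omega

/-- index type: antitone tuples -/
def Idx (n : ℕ) : Type := {f : Fin n → ℕ // Antitone f}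

noncomputable def Wt {n : ℕ} (f : Fin n → ℕ) : ℕ := ∑ i : Fin n, (i.1 + 1) * f i

noncomputable def term (q : ℂ) (n : ℕ) (x : Idx n) : ℂ :=
  Cpart q x.1 * q ^ (4 * Wt x.1)

/-- the underlying function of the block-gluing map -/
def JF {n : ℕ} (k : ℕ) (v : ℕ) (x : Fin k → ℕ) : Fin n → ℕ :=
  fun i => if h : i.1 < k then x ⟨i.1, h⟩ + v + 1 else v

lemma JF_pos {n k v : ℕ} (x : Fin k → ℕ) (i : Fin n) (h : i.1 < k) :
    JF k v x i = x ⟨i.1, h⟩ + v + 1 := dif_pos h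

lemma JF_neg {n k v : ℕ} (x : Fin k → ℕ) (i : Fin n) (h : ¬ i.1 < k) :
    JF k v x i = v := dif_neg h

lemma JF_antitone {n k v : ℕ} {x : Fin k → ℕ} (hx : Antitone x) :
    Antitone (JF (n := n) k v x) := by
  intro i j hij
  have hij' : i.1 ≤ j.1 := hij
  by_cases hi : i.1 < k
  · by_cases hj : j.1 < k
    · rw [JF_pos x i hi, JF_pos x j hj]
      have : x ⟨j.1, hj⟩ ≤ x ⟨i.1, hi⟩ := hx (show (⟨i.1, hi⟩ : Fin k) ≤ ⟨j.1, hj⟩ from hij')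
      omega
    · rw [JF_pos x i hi, JF_neg x j hj]; omega
  · have hj : ¬ j.1 < k := by omega
    rw [JF_neg x i hi, JF_neg x j hj]

/-- the block-gluing map -/
def J (n : ℕ) : (Σ g : Fin (n + 1), ℕ × Idx (n - g.1)) → Idx (n + 1) :=
  fun p => ⟨JF (n - p.1.1) p.2.1 p.2.2.1, JF_antitone p.2.2.2⟩

/-- weight of a glued tuple -/
lemma W_JF {n k : ℕ} (hk : k ≤ n) (v : ℕ) (x : Fin k → ℕ) :
    Wt (JF (n := n + 1) k v x) = Wt x + T k + v * T (n + 1) := by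
  have h1 : Wt (JF (n := n + 1) k v x) =
      ∑ m ∈ Finset.range (n + 1),
        ((m + 1) * (if h : m < k then x ⟨m, h⟩ + v + 1 else v)) :=
    Fin.sum_univ_eq_sum_range (fun m => (m + 1) * (if h : m < k then x ⟨m, h⟩ + v + 1 else v))
      (n + 1)
  have hx' : Wt x = ∑ m ∈ Finset.range k, ((m + 1) * (if h : m < k then x ⟨m, h⟩ else 0)) := by
    rw [show Wt x = ∑ i : Fin k, ((i.1 + 1) * (if h : i.1 < k then x ⟨i.1, h⟩ else 0)) from
      Finset.sum_congr rfl fun i _ => by rw [dif_pos i.2]]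
    exact Fin.sum_univ_eq_sum_range (fun m => (m + 1) * (if h : m < k then x ⟨m, h⟩ else 0)) k
  have hsplit : ∑ m ∈ Finset.range (n + 1),
        ((m + 1) * (if h : m < k then x ⟨m, h⟩ + v + 1 else v)) =
      ∑ m ∈ Finset.Ico 0 k, ((m + 1) * (if h : m < k then x ⟨m, h⟩ + v + 1 else v)) +
      ∑ m ∈ Finset.Ico k (n + 1), ((m + 1) * (if h : m < k then x ⟨m, h⟩ + v + 1 else v)) := by
    rw [Finset.range_eq_Ico,
      Finset.sum_Ico_consecutive _ (Nat.zero_le k) (by omega : k ≤ n + 1)]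
  have e1 : ∑ m ∈ Finset.Ico 0 k, ((m + 1) * (if h : m < k then x ⟨m, h⟩ + v + 1 else v)) =
      Wt x + (v + 1) * T k := by
    rw [← Finset.range_eq_Ico,
      Finset.sum_congr rfl (fun m hm => show
        (m + 1) * (if h : m < k then x ⟨m, h⟩ + v + 1 else v)
          = (m + 1) * (if h : m < k then x ⟨m, h⟩ else 0) + (v + 1) * (m + 1) from by
        rw [dif_pos (Finset.mem_range.1 hm), dif_pos (Finset.mem_range.1 hm)]; ring),
      Finset.sum_add_distrib, ← Finset.mul_sum, ← hx', ← T]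
  have e2 : ∑ m ∈ Finset.Ico k (n + 1), ((m + 1) * (if h : m < k then x ⟨m, h⟩ + v + 1 else v)) =
      v * ∑ m ∈ Finset.Ico k (n + 1), (m + 1) := by
    rw [Finset.mul_sum]
    exact Finset.sum_congr rfl fun m hm => by
      rw [dif_neg (by have := (Finset.mem_Ico.1 hm).1; omega)]; ring
  have e3 : T (n + 1) = T k + ∑ m ∈ Finset.Ico k (n + 1), (m + 1) := by
    rw [T, T, Finset.range_eq_Ico, Finset.range_eq_Ico]
    exact (Finset.sum_Ico_consecutive (fun m => m + 1) (Nat.zero_le k)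
      (by omega : k ≤ n + 1)).symm
  rw [h1, hsplit, e1, e2, e3]
  ring

/-- the count of the minimal value in a glued tuple -/
lemma count_min {n k : ℕ} (hk : k ≤ n) (v : ℕ) (x : Fin k → ℕ) :
    ((Finset.univ : Finset (Fin (n + 1))).filter (fun i => JF k v x i = v)).card
      = n + 1 - k := by
  have hfe : (Finset.univ : Finset (Fin (n + 1))).filter (fun i => JF k v x i = v)
      = Finset.univ.filter (fun i : Fin (n + 1) => ¬ i.1 < k) := by
    apply Finset.filter_congr
    intro i _
    by_cases h : i.1 < k
    · rw [JF_pos x i h]; simp [h]; omega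
    · rw [JF_neg x i h]; simp [h]
  have hlt : (Finset.univ : Finset (Fin (n + 1))).filter (fun i : Fin (n + 1) => i.1 < k)
      = Finset.Iio (⟨k, by omega⟩ : Fin (n + 1)) := by
    ext i
    simp [Fin.lt_def]
  have := Finset.card_filter_add_card_filter_not
    (s := (Finset.univ : Finset (Fin (n + 1)))) (p := fun i : Fin (n + 1) => i.1 < k)
  rw [hlt, Finset.card_univ, Fintype.card_fin] at this
  rw [Fin.card_Iio] at this
  simp only [Fin.val_mk] at this
  rw [hfe]
  omega

/-- counts of the shifted values in a glued tuple -/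
lemma count_shift {n k : ℕ} (hk : k ≤ n) (v : ℕ) (x : Fin k → ℕ) (b : ℕ) :
    ((Finset.univ : Finset (Fin (n + 1))).filter (fun i => JF k v x i = b + (v + 1))).card
      = ((Finset.univ : Finset (Fin k)).filter (fun j => x j = b)).card := by
  have key : ∀ i : Fin (n + 1), JF k v x i = b + (v + 1) → i.1 < k := by
    intro i hi
    by_contra h
    rw [JF_neg x i h] at hi
    omega
  refine Finset.card_bij'
    (fun i hi => (⟨i.1, key i (Finset.mem_filter.1 hi).2⟩ : Fin k))
    (fun j _ => (⟨j.1, by omega⟩ : Fin (n + 1))) ?_ ?_ ?_ ?_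
  · intro i hi
    have h2 := (Finset.mem_filter.1 hi).2
    have hik := key i h2
    rw [JF_pos x i hik] at h2
    simp only [Finset.mem_filter, Finset.mem_univ, true_and]
    omega
  · intro j hj
    have h2 := (Finset.mem_filter.1 hj).2
    simp only [Finset.mem_filter, Finset.mem_univ, true_and]
    rw [JF_pos (n := n + 1) x ⟨j.1, by omega⟩ j.2]
    simp only [Fin.eta]
    omega
  · intro i _; rfl
  · intro j _; rfl

/-- image of a glued tuple -/
lemma image_JF {n k : ℕ} (hk : k ≤ n) (v : ℕ) (x : Fin k → ℕ) :
    Finset.image (JF (n := n + 1) k v x) Finset.univ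
      = insert v ((Finset.image x Finset.univ).image (· + (v + 1))) := by
  ext u
  simp only [Finset.mem_insert, Finset.mem_image, Finset.mem_univ, true_and]
  constructor
  · rintro ⟨i, rfl⟩
    by_cases h : i.1 < k
    · right
      exact ⟨x ⟨i.1, h⟩, ⟨⟨i.1, h⟩, rfl⟩, (JF_pos x i h).symm⟩
    · left
      exact JF_neg x i h
  · rintro (rfl | ⟨b, ⟨j, rfl⟩, rfl⟩)
    · exact ⟨⟨n, by omega⟩, JF_neg x _ (by simp; omega)⟩
    · refine ⟨⟨j.1, by omega⟩, ?_⟩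
      rw [JF_pos (n := n + 1) x ⟨j.1, by omega⟩ j.2]
      simp only [Fin.eta]
      omega

/-- Cpart of a glued tuple -/
lemma Cpart_JF (q : ℂ) {n k : ℕ} (hk : k ≤ n) (v : ℕ) (x : Fin k → ℕ) :
    Cpart q (JF (n := n + 1) k v x)
      = (qFactorial (q ^ 2) (n + 1 - k))⁻¹ * Cpart q x := by
  have hnotmem : v ∉ (Finset.image x Finset.univ).image (· + (v + 1)) := by
    simp only [Finset.mem_image, Finset.mem_univ, true_and, not_exists]
    rintro b ⟨_, hb⟩
    omega
  rw [Cpart, image_JF hk v x, Finset.prod_insert hnotmem, count_min hk v x]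
  congr 1
  rw [Finset.prod_image (by intro a _ b _ h; have h' : a + (v + 1) = b + (v + 1) := h; omega)]
  rw [Cpart]
  exact Finset.prod_congr rfl fun b _ => by rw [count_shift hk v x b]

lemma term_J (q : ℂ) {n : ℕ} (p : Σ g : Fin (n + 1), ℕ × Idx (n - g.1)) :
    term q (n + 1) (J n p) =
      (q ^ (4 * T (n + 1))) ^ p.2.1 *
        ((qFactorial (q ^ 2) (p.1.1 + 1))⁻¹ * q ^ (4 * T (n - p.1.1))
          * term q (n - p.1.1) p.2.2) := by
  obtain ⟨g, v, x⟩ := p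
  have hk : n - g.1 ≤ n := Nat.sub_le n g.1
  have hg : n + 1 - (n - g.1) = g.1 + 1 := by have := g.2; omega
  show term q (n + 1) ⟨JF (n - g.1) v x.1, _⟩ = _
  unfold term
  show Cpart q (JF (n - g.1) v x.1) * q ^ (4 * Wt (JF (n - g.1) v x.1)) = _
  rw [Cpart_JF q hk v x.1, W_JF hk v x.1, hg]
  rw [show 4 * (Wt x.1 + T (n - g.1) + v * T (n + 1))
      = 4 * Wt x.1 + 4 * T (n - g.1) + 4 * T (n + 1) * v from by ring]
  rw [pow_add, pow_add, pow_mul]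
  ring

lemma J_injective (n : ℕ) : Function.Injective (J n) := by
  rintro ⟨g, v, x⟩ ⟨g', v', x'⟩ h
  have hfun : ∀ i : Fin (n + 1), JF (n - g.1) v x.1 i = JF (n - g'.1) v' x'.1 i := by
    intro i
    exact congrFun (congrArg Subtype.val h) i
  have hlast : v = v' := by
    have := hfun ⟨n, by omega⟩
    rw [JF_neg _ _ (by simp), JF_neg _ _ (by simp)] at this
    exact this
  subst hlast
  have hkk : n - g.1 = n - g'.1 := by
    by_contra hne
    rcases Nat.lt_or_ge (n - g.1) (n - g'.1) with hlt | hge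
    · have := hfun ⟨n - g.1, by omega⟩
      rw [JF_neg _ _ (by simp), JF_pos x'.1 _ (by simpa using hlt)] at this
      omega
    · have hlt' : n - g'.1 < n - g.1 := by omega
      have := hfun ⟨n - g'.1, by omega⟩
      rw [JF_pos x.1 _ (by simpa using hlt'), JF_neg _ _ (by simp)] at this
      omega
  have hgg : g = g' := by
    apply Fin.ext
    have h1 := g.2
    have h2 := g'.2
    omega
  subst hgg
  have hxx : x = x' := by
    apply Subtype.ext
    funext j
    have := hfun ⟨j.1, by have := j.2; omega⟩
    rw [JF_pos x.1 _ (by simpa using j.2), JF_pos x'.1 _ (by simpa using j.2)] at this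
    simpa using this
  rw [hxx]

lemma downclosed_iff {N : ℕ} (p : Fin N → Prop) [DecidablePred p]
    (hdown : ∀ i j : Fin N, i ≤ j → p j → p i) (i : Fin N) :
    p i ↔ i.1 < (Finset.univ.filter p).card := by
  constructor
  · intro hi
    have hsub : Finset.Iic i ⊆ Finset.univ.filter p := by
      intro j hj
      exact Finset.mem_filter.2 ⟨Finset.mem_univ _, hdown j i (Finset.mem_Iic.1 hj) hi⟩
    have := Finset.card_le_card hsub
    rw [Fin.card_Iic] at this
    omega
  · intro hlt
    by_contra hni
    have hsub : Finset.univ.filter p ⊆ Finset.Iio i := by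
      intro j hj
      rw [Finset.mem_Iio]
      by_contra hij
      exact hni (hdown i j (le_of_not_gt hij) (Finset.mem_filter.1 hj).2)
    have := Finset.card_le_card hsub
    rw [Fin.card_Iio] at this
    omega

lemma J_surjective (n : ℕ) : Function.Surjective (J n) := by
  rintro ⟨y, hy⟩
  set v := y ⟨n, by omega⟩ with hv
  set p : Fin (n + 1) → Prop := fun i => v < y i with hp
  have hdown : ∀ i j : Fin (n + 1), i ≤ j → p j → p i := by
    intro i j hij hj
    exact lt_of_lt_of_le hj (hy hij)
  set kk := (Finset.univ.filter p).card with hkk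
  have hiff : ∀ i : Fin (n + 1), p i ↔ i.1 < kk := downclosed_iff p hdown
  have hkn : kk ≤ n := by
    by_contra h
    have := (hiff ⟨n, by omega⟩).2 (by simp; omega)
    simp only [hp, hv] at this
    exact lt_irrefl _ this
  refine ⟨⟨⟨n - kk, by omega⟩, v, ⟨fun j => y ⟨j.1, by have := j.2; omega⟩ - (v + 1), ?_⟩⟩, ?_⟩
  · intro a b hab
    dsimp only
    refine Nat.sub_le_sub_right ?_ _
    exact hy (show (⟨a.1, by have := a.2; omega⟩ : Fin (n + 1)) ≤ ⟨b.1, by have := b.2; omega⟩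
      from hab)
  · apply Subtype.ext
    funext i
    show JF (n - (n - kk)) v _ i = y i
    have hnn : n - (n - kk) = kk := by omega
    by_cases h : i.1 < n - (n - kk)
    · rw [JF_pos _ i h]
      dsimp only
      have hpi : v < y i := (hiff i).2 (by omega)
      have hyy : ∀ hh : i.1 < n + 1, y ⟨i.1, hh⟩ = y i := fun hh => congrArg y (Fin.ext rfl)
      rw [hyy]
      omega
    · rw [JF_neg _ i h]
      have hnpi : ¬ v < y i := fun hcon => by
        have := (hiff i).1 hcon
        omega
      have hvy : v ≤ y i := hy (show i ≤ ⟨n, by omega⟩ from by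
        rw [Fin.le_def]; have := i.2; simpa using by omega)
      omega

end Stmt5

namespace Stmt5

lemma ht_of_hq {q : ℂ} (hq : ‖q‖ < 1) :
    ∀ j : ℕ, 1 ≤ j → (1 : ℂ) - (q ^ 2) ^ j ≠ 0 := by
  intro j hj h
  rw [sub_eq_zero] at h
  have h2 : ‖(q ^ 2) ^ j‖ < 1 := by
    rw [← pow_mul, norm_pow]
    exact pow_lt_one₀ (norm_nonneg _) hq (by omega)
  rw [← h] at h2
  simp at h2

instance : Unique (Idx 0) where
  default := ⟨fun i => i.elim0, by intro a; exact a.elim0⟩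
  uniq := fun x => Subtype.ext (funext fun i => i.elim0)

noncomputable def Bf (q : ℂ) (n : ℕ) (g : Fin (n + 1)) (x : Idx (n - g.1)) : ℂ :=
  (qFactorial (q ^ 2) (g.1 + 1))⁻¹ * q ^ (4 * T (n - g.1)) * term q (n - g.1) x

noncomputable def expr (q : ℂ) (n : ℕ) (j : ℕ) : ℂ :=
  (1 - q ^ (4 * T (n + 1)))⁻¹ * ((qFactorial (q ^ 2) (j + 1))⁻¹ * q ^ (4 * T (n - j)) *
    ((1 - q ^ 2) ^ (n - j + 1) * (P (q ^ 2) (n - j) * P (q ^ 2) (n - j + 1))⁻¹))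

lemma expr_eq {q : ℂ} (hq : ‖q‖ < 1) {n m : ℕ} (hm : m ≤ n) :
    expr q n (n - m) = (1 - q ^ (4 * T (n + 1)))⁻¹ *
      ((1 - q ^ 2) ^ (n + 2) * (P (q ^ 2) (n + 1) * P (q ^ 2) (n + 2))⁻¹ *
        cc (q ^ 2) (n + 1) m) := by
  have ht := ht_of_hq hq
  have h1t : (1 : ℂ) - q ^ 2 ≠ 0 := by simpa using ht 1 le_rfl
  obtain ⟨a, rfl⟩ : ∃ a, n = m + a := ⟨n - m, by omega⟩
  rw [expr, show m + a - m = a from by omega, show m + a - a = m from by omega]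
  rw [qFactorial_eq, cc, show m + a + 1 - m = a + 1 from by omega]
  rw [show q ^ (4 * T m) = (q ^ 2) ^ (m * (m + 1)) from by
    rw [show 4 * T m = 2 * (m * (m + 1)) from by
        rw [← T_two m]; ring,
      pow_mul]]
  rw [show ((1 : ℂ) - q ^ 2) ^ (m + a + 2) = (1 - q ^ 2) ^ (a + 1) * (1 - q ^ 2) ^ (m + 1) from by
    rw [← pow_add]; congr 1; omega]
  have hPa := P_ne_zero ht (a + 1)
  have hPm := P_ne_zero ht m
  have hPm1 := P_ne_zero ht (m + 1)
  have hPn1 := P_ne_zero ht (m + a + 1)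
  have hPn2 := P_ne_zero ht (m + a + 2)
  have h1ta : ((1 : ℂ) - q ^ 2) ^ (a + 1) ≠ 0 := pow_ne_zero _ h1t
  have h1tm : ((1 : ℂ) - q ^ 2) ^ (m + 1) ≠ 0 := pow_ne_zero _ h1t
  congr 1
  field_simp

lemma master (q : ℂ) (hq : ‖q‖ < 1) :
    ∀ n : ℕ, Summable (fun x : Idx n => ‖term q n x‖) ∧
      ∑' x : Idx n, term q n x
        = (1 - q ^ 2) ^ (n + 1) * (P (q ^ 2) n * P (q ^ 2) (n + 1))⁻¹ := by
  have ht := ht_of_hq hq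
  have h1t : (1 : ℂ) - q ^ 2 ≠ 0 := by simpa using ht 1 le_rfl
  intro n
  induction n using Nat.strong_induction_on with
  | _ n IH =>
  cases n with
  | zero =>
    constructor
    · exact Summable.of_finite
    · rw [tsum_eq_single (default : Idx 0) (fun b hb => absurd (Subsingleton.elim b default) hb)]
      have h0 : term q 0 default = 1 := by
        simp only [term, Cpart, Wt]
        rw [Finset.univ_eq_empty]
        simp
      rw [h0, P_zero, P_succ, P_zero]
      simp only [zero_add, pow_one, one_mul]
      exact (mul_inv_cancel₀ h1t).symm
  | succ n =>
    have hR : ‖q ^ (4 * T (n + 1))‖ < 1 := by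
      rw [norm_pow]
      exact pow_lt_one₀ (norm_nonneg q) hq
        (by have := T_pos n; omega)
    have hRt : q ^ (4 * T (n + 1)) = (q ^ 2) ^ ((n + 1) * (n + 2)) := by
      rw [show 4 * T (n + 1) = 2 * ((n + 1) * (n + 2)) from by
          rw [show (n + 1) * (n + 2) = (n + 1) * (n + 1 + 1) from by ring, ← T_two (n + 1)]
          ring,
        pow_mul]
    have hRne : (1 : ℂ) - q ^ (4 * T (n + 1)) ≠ 0 := by
      rw [hRt]
      exact ht _ (Nat.one_le_iff_ne_zero.2 (by positivity))
    have hgeo_norm : Summable (fun v : ℕ => ‖(q ^ (4 * T (n + 1))) ^ v‖) := by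
      simpa [norm_pow] using summable_geometric_of_lt_one (norm_nonneg _) hR
    have hB : ∀ g : Fin (n + 1), Summable (fun x => ‖Bf q n g x‖) := by
      intro g
      have h0 := (IH (n - g.1) (by omega)).1
      have h1 := h0.mul_left ‖(qFactorial (q ^ 2) (g.1 + 1))⁻¹ * q ^ (4 * T (n - g.1))‖
      refine h1.congr fun x => ?_
      simp only [Bf]
      exact (norm_mul _ _).symm
    have hfib : ∀ g : Fin (n + 1), Summable (fun p : ℕ × Idx (n - g.1) =>
        ‖(q ^ (4 * T (n + 1))) ^ p.1 * Bf q n g p.2‖) := fun g =>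
      Summable.mul_norm hgeo_norm (hB g)
    have hsig : Summable (fun p : (Σ g : Fin (n + 1), ℕ × Idx (n - g.1)) =>
        ‖(q ^ (4 * T (n + 1))) ^ p.2.1 * Bf q n p.1 p.2.2‖) := by
      apply (summable_sigma_of_nonneg (fun _ => norm_nonneg _)).2
      exact ⟨fun g => hfib g, Summable.of_finite⟩
    have hEq : ∀ p : (Σ g : Fin (n + 1), ℕ × Idx (n - g.1)),
        term q (n + 1) (J n p) = (q ^ (4 * T (n + 1))) ^ p.2.1 * Bf q n p.1 p.2.2 := by
      intro p
      rw [term_J q p]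
      simp only [Bf]
    have hbij : Function.Bijective (J n) := ⟨J_injective n, J_surjective n⟩
    have hsn : Summable (fun x : Idx (n + 1) => ‖term q (n + 1) x‖) := by
      rw [← Equiv.summable_iff (Equiv.ofBijective _ hbij)]
      refine hsig.congr fun p => ?_
      show _ = ‖term q (n + 1) (J n p)‖
      rw [hEq p]
    refine ⟨hsn, ?_⟩
    have e0 : ∑' x : Idx (n + 1), term q (n + 1) x
        = ∑' p : (Σ g : Fin (n + 1), ℕ × Idx (n - g.1)), term q (n + 1) (J n p) :=
      ((Equiv.ofBijective _ hbij).tsum_eq (term q (n + 1))).symm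
    rw [e0, tsum_congr hEq, Summable.tsum_sigma hsig.of_norm, tsum_fintype]
    have e2 : ∀ g : Fin (n + 1),
        ∑' p : ℕ × Idx (n - g.1), ((q ^ (4 * T (n + 1))) ^ p.1 * Bf q n g p.2) = expr q n g.1 := by
      intro g
      rw [← tsum_mul_tsum_of_summable_norm hgeo_norm (hB g),
        tsum_geometric_of_norm_lt_one hR]
      simp only [Bf]
      rw [tsum_mul_left, (IH (n - g.1) (by omega)).2]
      simp only [expr]
    rw [Finset.sum_congr rfl (fun g _ => e2 g),
      Fin.sum_univ_eq_sum_range (expr q n) (n + 1), ← Finset.sum_range_reflect]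
    simp only [show ∀ j : ℕ, n + 1 - 1 - j = n - j from fun j => by omega]
    have e3 : ∀ m ∈ Finset.range (n + 1), expr q n (n - m)
        = (1 - q ^ (4 * T (n + 1)))⁻¹ *
          ((1 - q ^ 2) ^ (n + 2) * (P (q ^ 2) (n + 1) * P (q ^ 2) (n + 2))⁻¹ *
            cc (q ^ 2) (n + 1) m) :=
      fun m hm => expr_eq hq (by have := Finset.mem_range.1 hm; omega)
    rw [Finset.sum_congr rfl e3, ← Finset.mul_sum, ← Finset.mul_sum]
    have hkey := key ht (n + 1)
    rw [Finset.sum_range_succ, cc_diag ht (n + 1)] at hkey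
    have hsum : ∑ m ∈ Finset.range (n + 1), cc (q ^ 2) (n + 1) m
        = 1 - (q ^ 2) ^ ((n + 1) * (n + 2)) := by
      rw [eq_sub_iff_add_eq, show (n + 1) * (n + 2) = (n + 1) * (n + 1 + 1) from by ring]
      exact hkey
    rw [hsum, hRt]
    have hXne : (1 : ℂ) - (q ^ 2) ^ ((n + 1) * (n + 2)) ≠ 0 :=
      ht _ (Nat.one_le_iff_ne_zero.2 (by positivity))
    rw [show (1 - (q ^ 2) ^ ((n + 1) * (n + 2)))⁻¹ *
        ((1 - q ^ 2) ^ (n + 2) * (P (q ^ 2) (n + 1) * P (q ^ 2) (n + 2))⁻¹ *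
          (1 - (q ^ 2) ^ ((n + 1) * (n + 2))))
        = ((1 - (q ^ 2) ^ ((n + 1) * (n + 2))) * (1 - (q ^ 2) ^ ((n + 1) * (n + 2)))⁻¹) *
          ((1 - q ^ 2) ^ (n + 2) * (P (q ^ 2) (n + 1) * P (q ^ 2) (n + 2))⁻¹) from by ring,
      mul_inv_cancel₀ hXne, one_mul]

end Stmt5

/-- For `|q| < 1` and `n ≥ 1`, the family
`λ ↦ C_λ(q)·q^{4(λ₁ + 2λ₂ + ⋯ + nλ_n)}`, indexed by weakly decreasing `n`-tuples of
nonnegative integers, is summable, and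
`1/((n)_{q²}!·(n+1)_{q²}!) = (1 − q²)ⁿ · Σ_λ C_λ(q)·q^{4(λ₁ + 2λ₂ + ⋯ + nλ_n)}`. -/
theorem stmt5 (q : ℂ) (hq : ‖q‖ < 1) (n : ℕ) (hn : 1 ≤ n) :
    Summable (fun lam : {f : Fin n → ℕ // Antitone f} =>
      Cpart q lam.1 * q ^ (4 * ∑ i : Fin n, (i.1 + 1) * lam.1 i)) ∧
    (qFactorial (q ^ 2) n * qFactorial (q ^ 2) (n + 1))⁻¹ =
      (1 - q ^ 2) ^ n * ∑' lam : {f : Fin n → ℕ // Antitone f},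
        Cpart q lam.1 * q ^ (4 * ∑ i : Fin n, (i.1 + 1) * lam.1 i) := by
  obtain ⟨hs, hv⟩ := Stmt5.master q hq n
  have ht := Stmt5.ht_of_hq hq
  have h1t : (1 : ℂ) - q ^ 2 ≠ 0 := by simpa using ht 1 le_rfl
  constructor
  · exact hs.of_norm
  · rw [show (∑' lam : {f : Fin n → ℕ // Antitone f},
        Cpart q lam.1 * q ^ (4 * ∑ i : Fin n, (i.1 + 1) * lam.1 i))
        = ∑' x : Stmt5.Idx n, Stmt5.term q n x from rfl, hv]
    rw [Stmt5.qFactorial_eq, Stmt5.qFactorial_eq]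
    have hPn := Stmt5.P_ne_zero ht n
    have hPn1 := Stmt5.P_ne_zero ht (n + 1)
    have h1tn : ((1 : ℂ) - q ^ 2) ^ n ≠ 0 := pow_ne_zero _ h1t
    have h1tn1 : ((1 : ℂ) - q ^ 2) ^ (n + 1) ≠ 0 := pow_ne_zero _ h1t
    field_simp
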